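/- arXiv:1311.0213 — 4 statements merged into one kernel-verified Lean document; each statement's English description precedes it below -/
import Mathlib

section
/- Let (X,d) be a compact metric space and f: X → X a homeomorphism that possesses a wandering point, i.e. a point x admitting an open neighborhood U such that f^k(U) ∩ U = ∅ for all k ≥ 1. Then h_pol(f) ≥ 1. -/
open Filter Metric Set

variable {Z : Type*} [MetricSpace Z]

/-- The dynamical metric `d_n^f(x,y) = max_{0 ≤ k ≤ n-1} d(f^k x, f^k y)`. -/
noncomputable def dynDist (f : Z → Z) (n : ℕ) (x y : Z) : ℝ :=
  ((Finset.range n).sup fun k => nndist (f^[k] x) (f^[k] y) : NNReal)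

/-- `G_n^f(Y,ε)`: the minimal number of balls of radius `ε` for the metric `d_n^f`
needed to cover `Y`. -/
noncomputable def coverNum (f : Z → Z) (n : ℕ) (Y : Set Z) (ε : ℝ) : ℕ :=
  sInf {m : ℕ | ∃ s : Finset Z, s.card = m ∧
    Y ⊆ ⋃ c ∈ s, {y : Z | dynDist f n c y ≤ ε}}

/-- The polynomial entropy of `f` on `Y`:
`h_pol(f,Y) = lim_{ε→0} limsup_{n→∞} log G_n^f(Y,ε) / log n`
(realized, by antitonicity in `ε`, as the supremum over `ε > 0`). -/
noncomputable def hpolOn (f : Z → Z) (Y : Set Z) : EReal :=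
  ⨆ ε : {e : ℝ // 0 < e}, Filter.atTop.limsup
    (fun n : ℕ => ((Real.log (coverNum f n Y ε.1) / Real.log n : ℝ) : EReal))

/-- The polynomial entropy of `f`. -/
noncomputable def hpol (f : Z → Z) : EReal := hpolOn f Set.univ

lemma dist_le_dynDist (f : Z → Z) {n k : ℕ} (hk : k < n) (a b : Z) :
    dist (f^[k] a) (f^[k] b) ≤ dynDist f n a b := by
  rw [dist_nndist, dynDist]
  exact_mod_cast Finset.le_sup (f := fun k => nndist (f^[k] a) (f^[k] b))
    (Finset.mem_range.mpr hk)

lemma dynDist_comm (f : Z → Z) (n : ℕ) (a b : Z) :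
    dynDist f n a b = dynDist f n b a := by
  unfold dynDist
  congr 1
  exact Finset.sup_congr rfl fun k _ => nndist_comm _ _

lemma dynDist_triangle (f : Z → Z) (n : ℕ) (a b c : Z) :
    dynDist f n a c ≤ dynDist f n a b + dynDist f n b c := by
  unfold dynDist
  rw [← NNReal.coe_add, NNReal.coe_le_coe]
  refine Finset.sup_le fun k hk => ?_
  exact le_trans (nndist_triangle (f^[k] a) (f^[k] b) (f^[k] c))
    (add_le_add (Finset.le_sup (f := fun k => nndist (f^[k] a) (f^[k] b)) hk)
      (Finset.le_sup (f := fun k => nndist (f^[k] b) (f^[k] c)) hk))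

lemma coverSet_nonempty {X : Type*} [MetricSpace X] [CompactSpace X]
    (f : X → X) (hf : Continuous f) (n : ℕ) {ε : ℝ} (hε : 0 < ε) :
    {m : ℕ | ∃ s : Finset X, s.card = m ∧
      (Set.univ : Set X) ⊆ ⋃ c ∈ s, {y : X | dynDist f n c y ≤ ε}}.Nonempty := by
  set V : X → Set X := fun c => ⋂ k ∈ Finset.range n, (f^[k]) ⁻¹' ball (f^[k] c) ε with hV
  have hVopen : ∀ c, IsOpen (V c) := fun c =>
    isOpen_biInter_finset fun k _ => (isOpen_ball).preimage (hf.iterate k)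
  have hVmem : ∀ c, c ∈ V c := fun c =>
    Set.mem_iInter₂.mpr fun k _ => by simp [hε]
  have hVsub : ∀ c, V c ⊆ {y : X | dynDist f n c y ≤ ε} := by
    intro c y hy
    simp only [Set.mem_setOf_eq, dynDist]
    rw [show ε = ((ε.toNNReal : NNReal) : ℝ) from (Real.coe_toNNReal ε hε.le).symm,
      NNReal.coe_le_coe]
    refine Finset.sup_le fun k hk => ?_
    have := Set.mem_iInter₂.mp hy k hk
    rw [Set.mem_preimage, mem_ball, dist_comm, dist_nndist] at this
    rw [← NNReal.coe_le_coe, Real.coe_toNNReal ε hε.le]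
    exact le_of_lt (by exact_mod_cast this)
  obtain ⟨t, ht⟩ := isCompact_univ.elim_finite_subcover V hVopen
    (fun z _ => Set.mem_iUnion.mpr ⟨z, hVmem z⟩)
  exact ⟨t.card, t, rfl, ht.trans (Set.iUnion₂_mono fun c _ => hVsub c)⟩

/-- **Proposition (wandering point forces `h_pol ≥ 1`).**
A homeomorphism of a compact metric space possessing a wandering point
(a point with an open neighborhood `U` such that `f^k(U) ∩ U = ∅` for all `k ≥ 1`)
has polynomial entropy at least 1. -/
theorem one_le_hpol_of_wandering {X : Type*} [MetricSpace X] [CompactSpace X]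
    (f : X ≃ₜ X) (x : X) (U : Set X) (hU : IsOpen U) (hxU : x ∈ U)
    (hwand : ∀ k : ℕ, 1 ≤ k → (⇑f)^[k] '' U ∩ U = ∅) :
    (1 : EReal) ≤ hpol (⇑f) := by
  -- choose ε with ball x ε ⊆ U
  obtain ⟨ε, hε, hball⟩ := Metric.isOpen_iff.mp hU x hxU
  have hε3 : 0 < ε / 3 := by linarith
  -- key counting estimate
  have key : ∀ n : ℕ, n ≤ coverNum (⇑f) n Set.univ (ε / 3) := by
    intro n
    have hne := coverSet_nonempty (⇑f) f.continuous n hε3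
    have hmem := Nat.sInf_mem hne
    obtain ⟨s, hcard, hcover⟩ := hmem
    rw [coverNum, ← hcard]
    -- separated points z j = f.symm^[j] x
    set z : ℕ → X := fun j => (⇑f.symm)^[j] x with hz
    have hLI : Function.LeftInverse (⇑f) (⇑f.symm) := f.apply_symm_apply
    have hfz : ∀ i j : ℕ, i ≤ j → (⇑f)^[j] (z i) = (⇑f)^[j - i] x := by
      intro i j hij
      have h2 : (⇑f)^[j] (z i) = (⇑f)^[(j - i) + i] (z i) := by
        rw [Nat.sub_add_cancel hij]
      rw [h2, hz, Function.iterate_add_apply]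
      congr 1
      exact (hLI.iterate i) x
    have hsep : ∀ i j : ℕ, i < j → j < n → ε ≤ dynDist (⇑f) n (z i) (z j) := by
      intro i j hij hjn
      refine le_trans ?_ (dist_le_dynDist (⇑f) hjn (z i) (z j))
      rw [hfz i j hij.le, hfz j j le_rfl, Nat.sub_self, Function.iterate_zero_apply]
      by_contra h
      push_neg at h
      have hmemU : (⇑f)^[j - i] x ∈ U := hball (by rwa [mem_ball])
      have himg : (⇑f)^[j - i] x ∈ (⇑f)^[j - i] '' U := ⟨x, hxU, rfl⟩
      have := hwand (j - i) (by omega)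
      exact absurd (Set.mem_inter himg hmemU) (by rw [this]; exact Set.notMem_empty _)
    -- choose centers
    have hc : ∀ j : Fin n, ∃ c ∈ s, dynDist (⇑f) n c (z j) ≤ ε / 3 := by
      intro j
      have := hcover (Set.mem_univ (z j))
      simpa using this
    choose g hg hgd using hc
    have hinj2 : ∀ i j : Fin n, (i : ℕ) < (j : ℕ) → g i ≠ g j := by
      intro i j h hgij
      have h1 : dynDist (⇑f) n (z i) (z j) ≤ ε / 3 + ε / 3 := by
        calc dynDist (⇑f) n (z i) (z j)
            ≤ dynDist (⇑f) n (z i) (g i) + dynDist (⇑f) n (g i) (z j) :=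
              dynDist_triangle _ _ _ _ _
          _ ≤ ε / 3 + ε / 3 := by
              rw [dynDist_comm]
              exact add_le_add (hgd i) (by rw [hgij]; exact hgd j)
      have h2 := hsep i j h j.isLt
      linarith
    have hinj : Function.Injective g := by
      intro i j hij
      rcases lt_trichotomy (i : ℕ) (j : ℕ) with h | h | h
      · exact absurd hij (hinj2 i j h)
      · exact Fin.ext h
      · exact absurd hij.symm (hinj2 j i h)
    calc n = Fintype.card (Fin n) := (Fintype.card_fin n).symm
      _ ≤ s.card := by
          have hgs : ∀ j, g j ∈ s := hg
          exact Fintype.card_le_of_injective (fun j => (⟨g j, hgs j⟩ : s))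
            (fun a b hab => hinj (by simpa using hab)) |>.trans_eq (Fintype.card_coe s)
  -- conclude
  have hterm : (1 : EReal) ≤ Filter.atTop.limsup
      (fun n : ℕ => ((Real.log (coverNum (⇑f) n Set.univ (ε / 3)) / Real.log n : ℝ) : EReal)) := by
    have hconst : (1 : EReal) = Filter.atTop.limsup (fun _ : ℕ => (1 : EReal)) :=
      (Filter.limsup_const _).symm
    rw [hconst]
    refine Filter.limsup_le_limsup ?_
    filter_upwards [Filter.eventually_ge_atTop 3] with n hn
    have hn1 : (1 : ℝ) < n := by exact_mod_cast (by omega : 1 < n)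
    have hlogn : 0 < Real.log n := Real.log_pos hn1
    have hcn : (n : ℝ) ≤ (coverNum (⇑f) n Set.univ (ε / 3) : ℝ) := by
      exact_mod_cast key n
    have : Real.log n ≤ Real.log (coverNum (⇑f) n Set.univ (ε / 3)) :=
      Real.log_le_log (by positivity) hcn
    have hratio : (1 : ℝ) ≤ Real.log (coverNum (⇑f) n Set.univ (ε / 3)) / Real.log n :=
      (one_le_div hlogn).mpr this
    exact_mod_cast hratio
  calc (1 : EReal) ≤ _ := hterm
    _ ≤ hpol (⇑f) := le_iSup
        (fun e : {e : ℝ // 0 < e} => Filter.atTop.limsup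
          (fun n : ℕ => ((Real.log (coverNum (⇑f) n Set.univ e.1) / Real.log n : ℝ) : EReal)))
        ⟨ε / 3, hε3⟩
end

section
/- (L¹ comparison lemma) Let I = [α,β] ⊂ R and let f, g: I → R be continuous functions such that there exist 0 < m < M with m ≤ f(x) ≤ M and m ≤ g(x) ≤ M for all x ∈ I, and max(‖f−g‖_{L¹(I)}, ‖f−g‖_∞) < m. Fix x₀ ∈ I and let γ and η be the solutions of the differential equations ẋ = f(x) and ẋ = g(x) respectively, with initial conditions γ(0) = η(0) = x₀, defined on their maximal time intervals J_γ and J_η on which they take values in I. Then for all t ∈ J_γ ∩ J_η: |γ(t) − η(t)| ≤ (M/m²)·‖f−g‖_{L¹(I)}. -/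
open Set intervalIntegral

/-- **The `L¹` comparison lemma.** Let `f, g : [α,β] → ℝ` be continuous with
`m ≤ f, g ≤ M` on `[α,β]` (`0 < m < M`) and `max(‖f-g‖_{L¹}, ‖f-g‖_∞) < m`.
If `γ` and `η` solve `ẋ = f(x)` and `ẋ = g(x)` with `γ(0) = η(0) = x₀ ∈ [α,β]`,
staying in `[α,β]` on time intervals `Jγ` and `Jη` containing `0`, then for all
`t ∈ Jγ ∩ Jη` one has `|γ(t) - η(t)| ≤ (M/m²)·‖f-g‖_{L¹([α,β])}`. -/
theorem L1_comparison_lemma (α β : ℝ) (hαβ : α ≤ β) (f g : ℝ → ℝ)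
    (hfc : ContinuousOn f (Icc α β)) (hgc : ContinuousOn g (Icc α β))
    (m M : ℝ) (hm : 0 < m) (hmM : m < M)
    (hfb : ∀ x ∈ Icc α β, f x ∈ Icc m M) (hgb : ∀ x ∈ Icc α β, g x ∈ Icc m M)
    (hL1 : (∫ u in α..β, |f u - g u|) < m)
    (hsup : ∀ x ∈ Icc α β, |f x - g x| < m)
    (x₀ : ℝ) (hx₀ : x₀ ∈ Icc α β)
    (Jγ Jη : Set ℝ) (hJγ : Jγ.OrdConnected) (hJη : Jη.OrdConnected)
    (h0γ : (0 : ℝ) ∈ Jγ) (h0η : (0 : ℝ) ∈ Jη)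
    (γ η : ℝ → ℝ) (hγ0 : γ 0 = x₀) (hη0 : η 0 = x₀)
    (hγ : ∀ t ∈ Jγ, γ t ∈ Icc α β ∧ HasDerivAt γ (f (γ t)) t)
    (hη : ∀ t ∈ Jη, η t ∈ Icc α β ∧ HasDerivAt η (g (η t)) t) :
    ∀ t ∈ Jγ ∩ Jη, |γ t - η t| ≤ (M / m ^ 2) * ∫ u in α..β, |f u - g u| := by
  -- the clamp to `[α,β]`
  set c : ℝ → ℝ := fun x => max α (min x β) with hc
  have hcmem : ∀ x, c x ∈ Icc α β := fun x =>
    ⟨le_max_left _ _, max_le hαβ (min_le_right _ _)⟩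
  have hcid : ∀ x ∈ Icc α β, c x = x := by
    intro x hx
    simp only [hc, min_eq_left hx.2, max_eq_right hx.1]
  have hccont : Continuous c := continuous_const.max (continuous_id.min continuous_const)
  -- the extensions of `f` and `g`
  set F₀ : ℝ → ℝ := fun x => f (c x) with hF₀
  set G₀ : ℝ → ℝ := fun x => g (c x) with hG₀
  have hF₀c : Continuous F₀ := hfc.comp_continuous hccont hcmem
  have hG₀c : Continuous G₀ := hgc.comp_continuous hccont hcmem
  have hF₀b : ∀ x, F₀ x ∈ Icc m M := fun x => hfb _ (hcmem x)
  have hG₀b : ∀ x, G₀ x ∈ Icc m M := fun x => hgb _ (hcmem x)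
  have hF₀pos : ∀ x, 0 < F₀ x := fun x => lt_of_lt_of_le hm (hF₀b x).1
  have hG₀pos : ∀ x, 0 < G₀ x := fun x => lt_of_lt_of_le hm (hG₀b x).1
  have hF₀eq : ∀ x ∈ Icc α β, F₀ x = f x := fun x hx => by show f (c x) = f x; rw [hcid x hx]
  have hG₀eq : ∀ x ∈ Icc α β, G₀ x = g x := fun x hx => by show g (c x) = g x; rw [hcid x hx]
  have hFic : Continuous fun u => (F₀ u)⁻¹ := hF₀c.inv₀ fun x => (hF₀pos x).ne'
  have hGic : Continuous fun u => (G₀ u)⁻¹ := hG₀c.inv₀ fun x => (hG₀pos x).ne'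
  -- the "time functions"
  set F : ℝ → ℝ := fun x => ∫ u in x₀..x, (F₀ u)⁻¹ with hFdef
  set G : ℝ → ℝ := fun x => ∫ u in x₀..x, (G₀ u)⁻¹ with hGdef
  have hF : ∀ x, HasDerivAt F ((F₀ x)⁻¹) x := fun x =>
    (hFic.integral_hasStrictDerivAt x₀ x).hasDerivAt
  have hG : ∀ x, HasDerivAt G ((G₀ x)⁻¹) x := fun x =>
    (hGic.integral_hasStrictDerivAt x₀ x).hasDerivAt
  -- `F ∘ γ = id` on `Jγ`
  have hconst : ∀ (J : Set ℝ), J.OrdConnected → (0 : ℝ) ∈ J → ∀ (φ F' : ℝ → ℝ) (h : ℝ → ℝ),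
      φ 0 = x₀ → (∀ x, HasDerivAt F' ((h x)⁻¹) x) →
      (∀ t ∈ J, φ t ∈ Icc α β ∧ HasDerivAt φ (h (φ t)) t) → (∀ x, 0 < h x) →
      F' x₀ = 0 → ∀ t ∈ J, F' (φ t) = t := by
    intro J hJ h0 φ F' h hφ0 hF' hφ hpos hz t ht
    have key : ∀ s ∈ J, HasDerivWithinAt (fun s => F' (φ s) - s) 0 J s := by
      intro s hs
      have := ((hF' (φ s)).comp s (hφ s hs).2).sub (hasDerivAt_id s)
      have h1 : (h (φ s))⁻¹ * h (φ s) - 1 = 0 := by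
        rw [inv_mul_cancel₀ (hpos (φ s)).ne']; ring
      rw [h1] at this
      exact this.hasDerivWithinAt
    have hconv : Convex ℝ J := convex_iff_ordConnected.mpr hJ
    have := hconv.norm_image_sub_le_of_norm_hasDerivWithin_le
      (C := 0) (f' := fun _ => (0 : ℝ)) key (fun x _ => by simp) h0 ht
    simp only [Real.norm_eq_abs, hφ0, hz, mul_zero, sub_zero, zero_mul] at this
    have h2 : F' (φ t) - t - 0 = 0 := by
      have := abs_nonpos_iff.mp (le_trans this (by simp))
      simpa using this
    linarith [h2]
  have hFz : F x₀ = 0 := by simp [hFdef]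
  have hGz : G x₀ = 0 := by simp [hGdef]
  have hFγ : ∀ t ∈ Jγ, F (γ t) = t :=
    hconst Jγ hJγ h0γ γ F F₀ hγ0 hF
      (fun t ht => ⟨(hγ t ht).1, (hF₀eq _ (hγ t ht).1) ▸ (hγ t ht).2⟩) hF₀pos hFz
  have hGη : ∀ t ∈ Jη, G (η t) = t :=
    hconst Jη hJη h0η η G G₀ hη0 hG
      (fun t ht => ⟨(hη t ht).1, (hG₀eq _ (hη t ht).1) ▸ (hη t ht).2⟩) hG₀pos hGz
  -- main estimate
  intro t ht
  obtain ⟨htγ, htη⟩ := ht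
  set b := γ t with hb
  set a := η t with ha
  have hbI : b ∈ Icc α β := (hγ t htγ).1
  have haI : a ∈ Icc α β := (hη t htη).1
  have hFG : F b = G a := by rw [hFγ t htγ, hGη t htη]
  -- Step A : |b - a| ≤ M * |F b - F a|
  have hFsub : F b - F a = ∫ u in a..b, (F₀ u)⁻¹ := by
    rw [hFdef]
    exact integral_interval_sub_left (hFic.intervalIntegrable _ _)
      (hFic.intervalIntegrable _ _)
  have hA' : ∀ p q : ℝ, p ≤ q → (q - p) / M ≤ ∫ u in p..q, (F₀ u)⁻¹ := by
    intro p q hpq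
    have : ∫ u in p..q, (M : ℝ)⁻¹ ≤ ∫ u in p..q, (F₀ u)⁻¹ := by
      apply integral_mono_on hpq (intervalIntegrable_const) (hFic.intervalIntegrable _ _)
      intro x _
      exact inv_anti₀ (hF₀pos x) (hF₀b x).2
    simpa [div_eq_mul_inv, sub_mul] using this
  have hMpos : (0 : ℝ) < M := lt_trans hm hmM
  have hA : |b - a| / M ≤ |F b - F a| := by
    rcases le_total a b with h | h
    · have := hA' a b h
      rw [← hFsub] at this
      rw [abs_of_nonneg (by linarith : (0:ℝ) ≤ b - a)]
      calc (b - a) / M ≤ F b - F a := this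
        _ ≤ |F b - F a| := le_abs_self _
    · have := hA' b a h
      have hFsub' : F a - F b = ∫ u in b..a, (F₀ u)⁻¹ := by
        rw [hFdef]
        exact integral_interval_sub_left (hFic.intervalIntegrable _ _)
          (hFic.intervalIntegrable _ _)
      rw [← hFsub'] at this
      rw [abs_of_nonpos (by linarith : b - a ≤ 0)]
      calc -(b - a) / M = (a - b) / M := by ring_nf
        _ ≤ F a - F b := this
        _ ≤ |F a - F b| := le_abs_self _
        _ = |F b - F a| := abs_sub_comm _ _
  -- Step B : |F b - F a| ≤ (∫ |f - g|) / m²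
  have hdiffc : Continuous fun u => (G₀ u)⁻¹ - (F₀ u)⁻¹ := hGic.sub hFic
  have hGF : F b - F a = ∫ u in x₀..a, ((G₀ u)⁻¹ - (F₀ u)⁻¹) := by
    rw [hFG, hGdef, hFdef]
    rw [integral_sub (hGic.intervalIntegrable _ _) (hFic.intervalIntegrable _ _)]
  have habsint : IntervalIntegrable (fun u => |f u - g u| / m ^ 2) MeasureTheory.volume α β := by
    apply ContinuousOn.intervalIntegrable
    rw [uIcc_of_le hαβ]
    exact ((hfc.sub hgc).abs.div_const _)
  have hptw : ∀ x ∈ Icc α β, |(G₀ x)⁻¹ - (F₀ x)⁻¹| ≤ |f x - g x| / m ^ 2 := by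
    intro x hx
    rw [hF₀eq x hx, hG₀eq x hx]
    have hfp : 0 < f x := lt_of_lt_of_le hm (hfb x hx).1
    have hgp : 0 < g x := lt_of_lt_of_le hm (hgb x hx).1
    rw [inv_sub_inv hgp.ne' hfp.ne']
    rw [abs_div]
    rw [abs_of_pos (mul_pos hgp hfp)]
    apply div_le_div_of_nonneg_left (abs_nonneg _) (by positivity)
    calc m ^ 2 = m * m := sq m
      _ ≤ g x * f x := mul_le_mul (hgb x hx).1 (hfb x hx).1 hm.le (lt_of_lt_of_le hm (hgb x hx).1).le
  have hB' : ∀ p q : ℝ, p ∈ Icc α β → q ∈ Icc α β → p ≤ q →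
      (∫ u in p..q, |(G₀ u)⁻¹ - (F₀ u)⁻¹|) ≤ (∫ u in α..β, |f u - g u|) / m ^ 2 := by
    intro p q hp hq hpq
    calc (∫ u in p..q, |(G₀ u)⁻¹ - (F₀ u)⁻¹|)
        ≤ ∫ u in p..q, |f u - g u| / m ^ 2 := by
          apply integral_mono_on hpq (hdiffc.abs.intervalIntegrable _ _)
            (habsint.mono_set (by rw [uIcc_of_le hpq, uIcc_of_le hαβ]
                                  exact Icc_subset_Icc hp.1 hq.2))
          intro x hx
          exact hptw x ⟨le_trans hp.1 hx.1, le_trans hx.2 hq.2⟩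
      _ ≤ ∫ u in α..β, |f u - g u| / m ^ 2 := by
          apply integral_mono_interval hp.1 hpq hq.2 _ habsint
          filter_upwards with x
          positivity
      _ = (∫ u in α..β, |f u - g u|) / m ^ 2 := by
          rw [integral_div]
  have hB : |F b - F a| ≤ (∫ u in α..β, |f u - g u|) / m ^ 2 := by
    rw [hGF]
    rcases le_total x₀ a with h | h
    · calc |∫ u in x₀..a, ((G₀ u)⁻¹ - (F₀ u)⁻¹)|
          ≤ ∫ u in x₀..a, |(G₀ u)⁻¹ - (F₀ u)⁻¹| := abs_integral_le_integral_abs h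
        _ ≤ _ := hB' x₀ a hx₀ haI h
    · rw [integral_symm, abs_neg]
      calc |∫ u in a..x₀, ((G₀ u)⁻¹ - (F₀ u)⁻¹)|
          ≤ ∫ u in a..x₀, |(G₀ u)⁻¹ - (F₀ u)⁻¹| := abs_integral_le_integral_abs h
        _ ≤ _ := hB' a x₀ haI hx₀ h
  -- combine
  have : |b - a| ≤ M * ((∫ u in α..β, |f u - g u|) / m ^ 2) := by
    have h1 : |b - a| / M ≤ (∫ u in α..β, |f u - g u|) / m ^ 2 := le_trans hA hB
    calc |b - a| = M * (|b - a| / M) := by field_simp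
      _ ≤ M * ((∫ u in α..β, |f u - g u|) / m ^ 2) :=
          mul_le_mul_of_nonneg_left h1 hMpos.le
  calc |γ t - η t| = |b - a| := rfl
    _ ≤ M * ((∫ u in α..β, |f u - g u|) / m ^ 2) := this
    _ = (M / m ^ 2) * ∫ u in α..β, |f u - g u| := by ring
end

section
/- Let X = (X₁, X₂) be a bounded Lipschitz vector field on R² with flow φ_X, satisfying μ_m := inf_{R²} X₁ > 0, and set μ_M := sup_{R²} X₁ and let κ be a Lipschitz constant of X₁. Let φ, ψ: R → R be functions with φ(x) < ψ(x) for all x, whose graphs G_φ = {(x,φ(x))} and G_ψ = {(x,ψ(x))} are orbits of φ_X. Then for every x₀ ∈ R, every T > 0, every y ∈ [φ(x₀), ψ(x₀)] and every t ∈ [0,T]: |π_x(φ_X^t(x₀, φ(x₀))) − π_x(φ_X^t(x₀, y))| ≤ (κ μ_M / μ_m²)·‖ψ − φ‖_{L¹([x₀, x₀ + μ_M T])}, where π_x: R² → R is the projection onto the first coordinate. -/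
open Set intervalIntegral

/-- Auxiliary: any integral curve of `X` (with `X₁ ∈ [μm, μM]`, `0 < μm`) is a graph
over the `x`-axis, with a continuous graph function `f`, and the time to travel from
abscissa `(γ 0).1` to abscissa `(γ t).1` equals `∫ (X₁(u, f u))⁻¹ du`. -/
private lemma curve_aux (X : ℝ × ℝ → ℝ × ℝ) (μm μM : ℝ) (hμm : 0 < μm)
    (hX₁ : ∀ z : ℝ × ℝ, (X z).1 ∈ Icc μm μM) (hXc : Continuous X)
    (γ : ℝ → ℝ × ℝ) (hγ : ∀ s, HasDerivAt γ (X (γ s)) s) :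
    ∃ f : ℝ → ℝ, Continuous f ∧ (∀ u : ℝ, ∃ s : ℝ, γ s = (u, f u)) ∧
      (∀ s : ℝ, (γ s).2 = f ((γ s).1)) ∧
      (∀ t : ℝ, ∫ u in (γ 0).1..(γ t).1, ((X (u, f u)).1)⁻¹ = t) ∧
      (∀ s : ℝ, 0 ≤ s → (γ 0).1 + μm * s ≤ (γ s).1 ∧ (γ s).1 ≤ (γ 0).1 + μM * s) := by
  have hγc : Continuous γ := continuous_iff_continuousAt.2 fun s => (hγ s).continuousAt
  set A : ℝ → ℝ := fun s => (γ s).1 with hAdef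
  have hA' : ∀ s, HasDerivAt A ((X (γ s)).1) s := by
    intro s
    have := HasFDerivAt.comp_hasDerivAt s
      ((ContinuousLinearMap.fst ℝ ℝ ℝ).hasFDerivAt (x := γ s)) (hγ s)
    simpa [Function.comp_def, hAdef] using this
  have hAc : Continuous A := continuous_fst.comp hγc
  have hmono : StrictMono A := by
    apply strictMono_of_deriv_pos
    intro s
    rw [(hA' s).deriv]
    exact hμm.trans_le (hX₁ (γ s)).1
  have hdlow : ∀ s, HasDerivAt (fun r => A r - μm * r) ((X (γ s)).1 - μm) s := by
    intro s
    exact ((hA' s).sub ((hasDerivAt_id s).const_mul μm)).congr_deriv (by ring)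
  have hdup : ∀ s, HasDerivAt (fun r => μM * r - A r) (μM - (X (γ s)).1) s := by
    intro s
    exact (((hasDerivAt_id s).const_mul μM).sub (hA' s)).congr_deriv (by ring)
  have hmono_low : Monotone fun r => A r - μm * r := by
    apply monotone_of_deriv_nonneg
    · exact fun s => (hdlow s).differentiableAt
    · intro s
      rw [(hdlow s).deriv]
      have := (hX₁ (γ s)).1; linarith
  have hmono_up : Monotone fun r => μM * r - A r := by
    apply monotone_of_deriv_nonneg
    · exact fun s => (hdup s).differentiableAt
    · intro s
      rw [(hdup s).deriv]
      have := (hX₁ (γ s)).2; linarith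
  have hsurj : Function.Surjective A := by
    intro x
    set M := |x - A 0| / μm with hM
    have hM0 : 0 ≤ M := div_nonneg (abs_nonneg _) hμm.le
    have hMm : μm * M = |x - A 0| := by
      rw [hM]; field_simp
    have h1 : A (-M) ≤ x := by
      have h : A (-M) - μm * (-M) ≤ A 0 - μm * 0 := hmono_low (by linarith)
      nlinarith [neg_abs_le (x - A 0)]
    have h2 : x ≤ A M := by
      have h : A 0 - μm * 0 ≤ A M - μm * M := hmono_low hM0
      nlinarith [le_abs_self (x - A 0)]
    obtain ⟨s, _, hs⟩ := intermediate_value_Icc (show (-M : ℝ) ≤ M by linarith)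
      hAc.continuousOn ⟨h1, h2⟩
    exact ⟨s, hs⟩
  let e := StrictMono.orderIsoOfSurjective A hmono hsurj
  have hcoe : (e : ℝ → ℝ) = A := StrictMono.coe_orderIsoOfSurjective A hmono hsurj
  set f : ℝ → ℝ := fun u => (γ (e.symm u)).2 with hfdef
  have hfc : Continuous f := continuous_snd.comp (hγc.comp e.symm.continuous)
  have hAτ : ∀ u, A (e.symm u) = u := by
    intro u; rw [← hcoe]; exact e.apply_symm_apply u
  have hτA : ∀ s, e.symm (A s) = s := by
    intro s; rw [← hcoe]; exact e.symm_apply_apply s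
  have hgraph : ∀ s, (γ s).2 = f ((γ s).1) := by
    intro s
    show (γ s).2 = (γ (e.symm ((γ s).1))).2
    rw [show (γ s).1 = A s from rfl, hτA]
  have hexists : ∀ u, ∃ s, γ s = (u, f u) := by
    intro u
    exact ⟨e.symm u, Prod.ext (hAτ u) rfl⟩
  have hWc : Continuous fun u => ((X (u, f u)).1)⁻¹ := by
    apply Continuous.inv₀
    · exact continuous_fst.comp (hXc.comp (continuous_id.prodMk hfc))
    · exact fun u => (hμm.trans_le (hX₁ _).1).ne'
  have hint : ∀ t : ℝ, ∫ u in (γ 0).1..(γ t).1, ((X (u, f u)).1)⁻¹ = t := by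
    intro t
    have hcv := intervalIntegral.integral_comp_smul_deriv (a := 0) (b := t)
      (f := A) (f' := fun s => (X (γ s)).1) (g := fun u => ((X (u, f u)).1)⁻¹)
      (fun s _ => hA' s) ((continuous_fst.comp (hXc.comp hγc)).continuousOn) hWc
    have hone : ∀ s : ℝ, (X (γ s)).1 • ((fun u => ((X (u, f u)).1)⁻¹) ∘ A) s = 1 := by
      intro s
      have hps : ((A s, f (A s)) : ℝ × ℝ) = γ s := Prod.ext rfl (hgraph s).symm
      simp only [Function.comp, smul_eq_mul]
      rw [hps]
      exact mul_inv_cancel₀ (hμm.trans_le (hX₁ _).1).ne'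
    have hc : t = ∫ u in (A 0)..(A t), ((X (u, f u)).1)⁻¹ := by
      calc t = ∫ _x in (0 : ℝ)..t, (1 : ℝ) := by simp
      _ = ∫ x in (0 : ℝ)..t, (X (γ x)).1 • ((fun u => ((X (u, f u)).1)⁻¹) ∘ A) x :=
        (intervalIntegral.integral_congr fun s _ => (hone s)).symm
      _ = ∫ u in (A 0)..(A t), ((X (u, f u)).1)⁻¹ := hcv
    exact hc.symm
  have hbounds : ∀ s : ℝ, 0 ≤ s →
      (γ 0).1 + μm * s ≤ (γ s).1 ∧ (γ s).1 ≤ (γ 0).1 + μM * s := by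
    intro s hs
    have h1 : A 0 - μm * 0 ≤ A s - μm * s := hmono_low hs
    have h2 : μM * 0 - A 0 ≤ μM * s - A s := hmono_up hs
    show A 0 + μm * s ≤ A s ∧ A s ≤ A 0 + μM * s
    constructor <;> linarith
  exact ⟨f, hfc, hexists, hgraph, hint, hbounds⟩

/-- **Deviation of verticals (Proposition `L¹`-Deviation).**
Let `X = (X₁,X₂)` be a bounded Lipschitz vector field on `ℝ²` with flow `Φ`,
with `0 < μ_m ≤ X₁ ≤ μ_M` and `κ` a Lipschitz constant of `X₁`. Let `φ < ψ` be
functions whose graphs are orbits of the flow (equivalently, flow-invariant).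
Then for every `x₀`, `T > 0`, `y ∈ [φ(x₀), ψ(x₀)]` and `t ∈ [0,T]`, the horizontal
deviation satisfies
`|π_x(Φ^t(x₀,φ(x₀))) - π_x(Φ^t(x₀,y))| ≤ (κ μ_M/μ_m²)·‖ψ-φ‖_{L¹([x₀, x₀+μ_M T])}`. -/
theorem deviation_le_L1 (X : ℝ × ℝ → ℝ × ℝ)
    (C : ℝ) (hbd : ∀ z : ℝ × ℝ, ‖X z‖ ≤ C)
    (κ' : NNReal) (hLip : LipschitzWith κ' X)
    (μm μM : ℝ) (hμm : 0 < μm) (hX₁ : ∀ z : ℝ × ℝ, (X z).1 ∈ Icc μm μM)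
    (κ : ℝ) (hκ : ∀ z z' : ℝ × ℝ, |(X z).1 - (X z').1| ≤ κ * ‖z - z'‖)
    (Φ : ℝ → ℝ × ℝ → ℝ × ℝ) (hΦ0 : ∀ z : ℝ × ℝ, Φ 0 z = z)
    (hΦ : ∀ (z : ℝ × ℝ) (t : ℝ), HasDerivAt (fun s => Φ s z) (X (Φ t z)) t)
    (φ ψ : ℝ → ℝ) (hφψ : ∀ x : ℝ, φ x < ψ x)
    (hφorb : ∀ (x t : ℝ), (Φ t (x, φ x)).2 = φ ((Φ t (x, φ x)).1))
    (hψorb : ∀ (x t : ℝ), (Φ t (x, ψ x)).2 = ψ ((Φ t (x, ψ x)).1)) :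
    ∀ (x₀ : ℝ) (T : ℝ), 0 < T → ∀ y ∈ Icc (φ x₀) (ψ x₀), ∀ t ∈ Icc (0 : ℝ) T,
      |(Φ t (x₀, φ x₀)).1 - (Φ t (x₀, y)).1| ≤
        (κ * μM / μm ^ 2) * ∫ u in x₀..(x₀ + μM * T), |ψ u - φ u| := by
  intro x₀ T hT y hy t ht
  have hXc : Continuous X := hLip.continuous
  have hμM : 0 < μM := hμm.trans_le ((hX₁ (0, 0)).1.trans (hX₁ (0, 0)).2)
  have hκ0 : 0 ≤ κ := by
    have h := hκ ((0 : ℝ), (0 : ℝ)) ((1 : ℝ), (0 : ℝ))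
    have hn : ‖(((0 : ℝ), (0 : ℝ)) : ℝ × ℝ) - ((1 : ℝ), (0 : ℝ))‖ = 1 := by
      simp [Prod.norm_def]
    rw [hn, mul_one] at h
    exact le_trans (abs_nonneg _) h
  -- the three curves
  obtain ⟨fa, hfac, hfaex, hfagr, hfaint, hfabd⟩ :=
    curve_aux X μm μM hμm hX₁ hXc (fun s => Φ s (x₀, φ x₀)) (fun s => hΦ _ s)
  obtain ⟨fb, hfbc, hfbex, hfbgr, hfbint, hfbbd⟩ :=
    curve_aux X μm μM hμm hX₁ hXc (fun s => Φ s (x₀, y)) (fun s => hΦ _ s)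
  obtain ⟨fc, hfcc, hfcex, hfcgr, -, -⟩ :=
    curve_aux X μm μM hμm hX₁ hXc (fun s => Φ s (x₀, ψ x₀)) (fun s => hΦ _ s)
  -- `φ` and `ψ` are continuous (they agree with the constructed graph functions)
  have hφeq : ∀ u, φ u = fa u := by
    intro u
    obtain ⟨s, hs⟩ := hfaex u
    have hs' : Φ s (x₀, φ x₀) = (u, fa u) := hs
    have h2 := hφorb x₀ s
    rw [hs'] at h2
    simpa using h2.symm
  have hψeq : ∀ u, ψ u = fc u := by
    intro u
    obtain ⟨s, hs⟩ := hfcex u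
    have hs' : Φ s (x₀, ψ x₀) = (u, fc u) := hs
    have h2 := hψorb x₀ s
    rw [hs'] at h2
    simpa using h2.symm
  have hφc : Continuous φ := by rw [funext hφeq]; exact hfac
  have hψc : Continuous ψ := by rw [funext hψeq]; exact hfcc
  -- semigroup property of the flow (from uniqueness of ODE solutions)
  have hsemi : ∀ (z : ℝ × ℝ) (u s : ℝ), Φ (s + u) z = Φ s (Φ u z) := by
    intro z u s
    have habs : 0 ≤ |s| := abs_nonneg s
    have h0mem : (0 : ℝ) ∈ Ioo (-(|s| + 1)) (|s| + 1) := ⟨by linarith, by linarith⟩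
    have key : EqOn (fun r => Φ (r + u) z) (fun r => Φ r (Φ u z))
        (Ioo (-(|s| + 1)) (|s| + 1)) := by
      apply ODE_solution_unique_of_mem_Ioo (v := fun _ x => X x)
        (s := fun _ => (univ : Set (ℝ × ℝ))) (fun _ _ => hLip.lipschitzOnWith) h0mem
      · intro r _
        refine ⟨?_, trivial⟩
        have hd := HasDerivAt.scomp (x := r) (hΦ z (r + u)) ((hasDerivAt_id r).add_const u)
        simpa [Function.comp_def] using hd
      · intro r _
        exact ⟨hΦ (Φ u z) r, trivial⟩
      · show Φ (0 + u) z = Φ 0 (Φ u z)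
        rw [zero_add, hΦ0]
    have hsmem : s ∈ Ioo (-(|s| + 1)) (|s| + 1) :=
      ⟨by nlinarith [neg_abs_le s], by nlinarith [le_abs_self s]⟩
    exact key hsmem
  -- touching an orbit forces identical initial condition
  have htouch : ∀ g : ℝ → ℝ, (∀ (x t : ℝ), (Φ t (x, g x)).2 = g ((Φ t (x, g x)).1)) →
      ∀ s₀ : ℝ, (Φ s₀ (x₀, y)).2 = g ((Φ s₀ (x₀, y)).1) → y = g x₀ := by
    intro g hgorb s₀ h
    have hz : Φ s₀ (x₀, y) = ((Φ s₀ (x₀, y)).1, g ((Φ s₀ (x₀, y)).1)) := Prod.ext rfl h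
    have h1 : Φ (-s₀ + s₀) (x₀, y) = Φ (-s₀) (Φ s₀ (x₀, y)) := hsemi (x₀, y) s₀ (-s₀)
    rw [hz, show -s₀ + s₀ = 0 by ring, hΦ0] at h1
    have h2 := hgorb ((Φ s₀ (x₀, y)).1) (-s₀)
    rw [← h1] at h2
    simpa using h2
  -- the middle curve stays between the two graphs
  have hγbc : Continuous fun s => Φ s (x₀, y) :=
    continuous_iff_continuousAt.2 fun s => (hΦ (x₀, y) s).continuousAt
  have hlow : ∀ s : ℝ, φ ((Φ s (x₀, y)).1) ≤ (Φ s (x₀, y)).2 := by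
    rcases eq_or_lt_of_le hy.1 with heq | hlt
    · intro s; rw [← heq]
      exact le_of_eq (hφorb x₀ s).symm
    · intro s
      by_contra hcon
      push_neg at hcon
      have hgc : Continuous fun r => (Φ r (x₀, y)).2 - φ ((Φ r (x₀, y)).1) :=
        (continuous_snd.comp hγbc).sub (hφc.comp (continuous_fst.comp hγbc))
      have hg0 : 0 < (Φ 0 (x₀, y)).2 - φ ((Φ 0 (x₀, y)).1) := by
        rw [hΦ0]; simpa using hlt
      have hmem : (0 : ℝ) ∈ uIcc ((Φ 0 (x₀, y)).2 - φ ((Φ 0 (x₀, y)).1))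
          ((Φ s (x₀, y)).2 - φ ((Φ s (x₀, y)).1)) := by
        rw [mem_uIcc]; right
        constructor <;> linarith
      obtain ⟨c, _, hc⟩ := intermediate_value_uIcc hgc.continuousOn hmem
      have hc' : (Φ c (x₀, y)).2 = φ ((Φ c (x₀, y)).1) := by
        have := hc; dsimp only at this; linarith
      exact absurd (htouch φ hφorb c hc') hlt.ne'
  have hupp : ∀ s : ℝ, (Φ s (x₀, y)).2 ≤ ψ ((Φ s (x₀, y)).1) := by
    rcases eq_or_lt_of_le hy.2 with heq | hlt
    · intro s; rw [heq]
      exact le_of_eq (hψorb x₀ s)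
    · intro s
      by_contra hcon
      push_neg at hcon
      have hgc : Continuous fun r => (Φ r (x₀, y)).2 - ψ ((Φ r (x₀, y)).1) :=
        (continuous_snd.comp hγbc).sub (hψc.comp (continuous_fst.comp hγbc))
      have hg0 : (Φ 0 (x₀, y)).2 - ψ ((Φ 0 (x₀, y)).1) < 0 := by
        rw [hΦ0]; simpa using hlt
      have hmem : (0 : ℝ) ∈ uIcc ((Φ 0 (x₀, y)).2 - ψ ((Φ 0 (x₀, y)).1))
          ((Φ s (x₀, y)).2 - ψ ((Φ s (x₀, y)).1)) := by
        rw [mem_uIcc]; left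
        constructor <;> linarith
      obtain ⟨c, _, hc⟩ := intermediate_value_uIcc hgc.continuousOn hmem
      have hc' : (Φ c (x₀, y)).2 = ψ ((Φ c (x₀, y)).1) := by
        have := hc; dsimp only at this; linarith
      exact absurd (htouch ψ hψorb c hc') hlt.ne
  have hfb_mem : ∀ u : ℝ, φ u ≤ fb u ∧ fb u ≤ ψ u := by
    intro u
    obtain ⟨s, hs⟩ := hfbex u
    have hs' : Φ s (x₀, y) = (u, fb u) := hs
    have h1 := hlow s
    have h2 := hupp s
    rw [hs'] at h1 h2
    exact ⟨by simpa using h1, by simpa using h2⟩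
  -- positions stay in the window
  have hA_mem : (Φ t (x₀, φ x₀)).1 ∈ Icc x₀ (x₀ + μM * T) := by
    obtain ⟨hl, hu⟩ := hfabd t ht.1
    simp only [hΦ0] at hl hu
    constructor
    · nlinarith [mul_nonneg hμm.le ht.1]
    · nlinarith [mul_nonneg hμM.le (sub_nonneg.2 ht.2)]
  have hB_mem : (Φ t (x₀, y)).1 ∈ Icc x₀ (x₀ + μM * T) := by
    obtain ⟨hl, hu⟩ := hfbbd t ht.1
    simp only [hΦ0] at hl hu
    constructor
    · nlinarith [mul_nonneg hμm.le ht.1]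
    · nlinarith [mul_nonneg hμM.le (sub_nonneg.2 ht.2)]
  -- time = weighted horizontal length
  have hint_a : ∫ u in x₀..(Φ t (x₀, φ x₀)).1, ((X (u, φ u)).1)⁻¹ = t := by
    have h := hfaint t
    simp only [hΦ0, ← hφeq] at h
    exact h
  have hint_b : ∫ u in x₀..(Φ t (x₀, y)).1, ((X (u, fb u)).1)⁻¹ = t := by
    have h := hfbint t
    simp only [hΦ0] at h
    exact h
  -- continuity and basic positivity facts
  have hW₁c : Continuous fun u => ((X (u, φ u)).1)⁻¹ :=
    Continuous.inv₀ (continuous_fst.comp (hXc.comp (continuous_id.prodMk hφc)))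
      fun u => (hμm.trans_le (hX₁ _).1).ne'
  have hW₂c : Continuous fun u => ((X (u, fb u)).1)⁻¹ :=
    Continuous.inv₀ (continuous_fst.comp (hXc.comp (continuous_id.prodMk hfbc)))
      fun u => (hμm.trans_le (hX₁ _).1).ne'
  have hμm2 : (0 : ℝ) < μm ^ 2 := by positivity
  have hconst : (0 : ℝ) ≤ κ / μm ^ 2 := by positivity
  -- the pointwise bound on the difference of inverse speeds
  have hbnd : ∀ u : ℝ, |((X (u, fb u)).1)⁻¹ - ((X (u, φ u)).1)⁻¹| ≤
      κ / μm ^ 2 * (ψ u - φ u) := by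
    intro u
    have ha := hX₁ (u, φ u)
    have hb := hX₁ (u, fb u)
    have ha0 : 0 < (X (u, φ u)).1 := hμm.trans_le ha.1
    have hb0 : 0 < (X (u, fb u)).1 := hμm.trans_le hb.1
    have hsub : ((u, fb u) : ℝ × ℝ) - (u, φ u) = (0, fb u - φ u) := by
      simp [Prod.ext_iff]
    have hnorm : ‖((u, fb u) : ℝ × ℝ) - (u, φ u)‖ = |fb u - φ u| := by
      rw [hsub, Prod.norm_def]
      simp [Real.norm_eq_abs]
    have hd : |(X (u, fb u)).1 - (X (u, φ u)).1| ≤ κ * (ψ u - φ u) := by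
      have h := hκ (u, fb u) (u, φ u)
      rw [hnorm] at h
      have h2 : |fb u - φ u| ≤ ψ u - φ u := by
        rw [abs_of_nonneg (sub_nonneg.2 (hfb_mem u).1)]
        linarith [(hfb_mem u).2]
      calc |(X (u, fb u)).1 - (X (u, φ u)).1| ≤ κ * |fb u - φ u| := h
      _ ≤ κ * (ψ u - φ u) := mul_le_mul_of_nonneg_left h2 hκ0
    have heq2 : ((X (u, fb u)).1)⁻¹ - ((X (u, φ u)).1)⁻¹ =
        ((X (u, φ u)).1 - (X (u, fb u)).1) / ((X (u, φ u)).1 * (X (u, fb u)).1) := by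
      rw [eq_div_iff (by positivity : (X (u, φ u)).1 * (X (u, fb u)).1 ≠ 0)]
      field_simp
    have hm2 : μm ^ 2 ≤ (X (u, φ u)).1 * (X (u, fb u)).1 := by nlinarith [ha.1, hb.1]
    rw [heq2, abs_div, abs_of_pos (mul_pos ha0 hb0), abs_sub_comm]
    calc |(X (u, fb u)).1 - (X (u, φ u)).1| / ((X (u, φ u)).1 * (X (u, fb u)).1) ≤
        (κ * (ψ u - φ u)) / μm ^ 2 :=
          div_le_div₀ (mul_nonneg hκ0 (sub_nonneg.2 (hφψ u).le)) hd hμm2 hm2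
    _ = κ / μm ^ 2 * (ψ u - φ u) := by ring
  have hIint : ∀ c d : ℝ, IntervalIntegrable (fun u => κ / μm ^ 2 * (ψ u - φ u)) MeasureTheory.volume c d :=
    fun c d => (continuous_const.mul (hψc.sub hφc)).intervalIntegrable c d
  have hIbound : ∀ c ∈ Icc x₀ (x₀ + μM * T),
      ∫ u in x₀..c, κ / μm ^ 2 * (ψ u - φ u) ≤
        κ / μm ^ 2 * ∫ u in x₀..x₀ + μM * T, (ψ u - φ u) := by
    intro c hc
    rw [intervalIntegral.integral_const_mul]
    apply mul_le_mul_of_nonneg_left _ hconst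
    have hadd := intervalIntegral.integral_add_adjacent_intervals
      (μ := MeasureTheory.volume) (a := x₀) (b := c) (c := x₀ + μM * T)
      ((hψc.sub hφc).intervalIntegrable _ _) ((hψc.sub hφc).intervalIntegrable _ _)
    have hpos : 0 ≤ ∫ u in c..x₀ + μM * T, (ψ u - φ u) :=
      intervalIntegral.integral_nonneg hc.2 fun u _ => sub_nonneg.2 (hφψ u).le
    simp only [Pi.sub_apply] at hadd
    linarith
  -- the main symmetric estimate
  have key : ∀ (V₁ V₂ : ℝ → ℝ) (c d : ℝ), Continuous V₁ → Continuous V₂ →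
      (∀ u, μM⁻¹ ≤ V₁ u) → (∀ u, |V₂ u - V₁ u| ≤ κ / μm ^ 2 * (ψ u - φ u)) →
      (∫ u in x₀..c, V₁ u) = t → (∫ u in x₀..d, V₂ u) = t →
      d ∈ Icc x₀ (x₀ + μM * T) → d ≤ c →
      c - d ≤ κ * μM / μm ^ 2 * ∫ u in x₀..x₀ + μM * T, (ψ u - φ u) := by
    intro V₁ V₂ c d hV₁c hV₂c hV₁lb hVbnd hic hid hd hdc
    have hi1 : ∀ a b : ℝ, IntervalIntegrable V₁ MeasureTheory.volume a b := fun a b =>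
      hV₁c.intervalIntegrable a b
    have hi2 : ∀ a b : ℝ, IntervalIntegrable V₂ MeasureTheory.volume a b := fun a b =>
      hV₂c.intervalIntegrable a b
    have hadd := intervalIntegral.integral_add_adjacent_intervals (hi1 x₀ d) (hi1 d c)
    have e1 : ∫ u in x₀..d, (V₂ u - V₁ u) = ∫ u in d..c, V₁ u := by
      rw [intervalIntegral.integral_sub (hi2 x₀ d) (hi1 x₀ d), hid]
      linarith [hadd, hic]
    have e2 : (c - d) * μM⁻¹ ≤ ∫ u in d..c, V₁ u := by
      have h0 : ∫ _u in d..c, (μM⁻¹ : ℝ) = (c - d) * μM⁻¹ := by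
        rw [intervalIntegral.integral_const, smul_eq_mul]
      rw [← h0]
      exact intervalIntegral.integral_mono_on hdc intervalIntegrable_const (hi1 d c)
        fun u _ => hV₁lb u
    have e3 : ∫ u in x₀..d, (V₂ u - V₁ u) ≤ ∫ u in x₀..d, κ / μm ^ 2 * (ψ u - φ u) :=
      intervalIntegral.integral_mono_on hd.1 ((hi2 x₀ d).sub (hi1 x₀ d)) (hIint x₀ d)
        fun u _ => (le_abs_self _).trans (hVbnd u)
    have e4 := hIbound d hd
    have e5 : (c - d) * μM⁻¹ ≤ κ / μm ^ 2 * ∫ u in x₀..x₀ + μM * T, (ψ u - φ u) := by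
      linarith
    have e6 := mul_le_mul_of_nonneg_right e5 hμM.le
    rw [mul_assoc, inv_mul_cancel₀ hμM.ne', mul_one] at e6
    calc c - d ≤ (κ / μm ^ 2 * ∫ u in x₀..x₀ + μM * T, (ψ u - φ u)) * μM := e6
    _ = κ * μM / μm ^ 2 * ∫ u in x₀..x₀ + μM * T, (ψ u - φ u) := by ring
  have hIabs : ∫ u in x₀..x₀ + μM * T, |ψ u - φ u| =
      ∫ u in x₀..x₀ + μM * T, (ψ u - φ u) :=
    intervalIntegral.integral_congr fun u _ => abs_of_nonneg (sub_nonneg.2 (hφψ u).le)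
  rw [hIabs]
  have hlb₁ : ∀ u : ℝ, μM⁻¹ ≤ ((X (u, φ u)).1)⁻¹ := fun u =>
    inv_anti₀ (hμm.trans_le (hX₁ _).1) (hX₁ _).2
  have hlb₂ : ∀ u : ℝ, μM⁻¹ ≤ ((X (u, fb u)).1)⁻¹ := fun u =>
    inv_anti₀ (hμm.trans_le (hX₁ _).1) (hX₁ _).2
  rcases le_total (Φ t (x₀, y)).1 (Φ t (x₀, φ x₀)).1 with hcase | hcase
  · rw [abs_of_nonneg (sub_nonneg.2 hcase)]
    exact key _ _ _ _ hW₁c hW₂c hlb₁ hbnd hint_a hint_b hB_mem hcase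
  · rw [abs_of_nonpos (sub_nonpos.2 hcase), neg_sub]
    exact key _ _ _ _ hW₂c hW₁c hlb₂ (fun u => by rw [abs_sub_comm]; exact hbnd u)
      hint_b hint_a hA_mem hcase
end

section
/- Let f: R → R be a C¹ increasing diffeomorphism. There exists a C¹ vector field X̂_f on R² of the form X̂_f(x,y) = (1, X₂(x,y)) with X₂(x+1, y) = X₂(x, y) for all (x,y) ∈ R², whose flow (φ̂_f^t)_{t∈R} is complete and satisfies φ̂_f^1(n, y) = (n+1, f(y)) for all (n, y) ∈ Z × R. -/
open Set

open Filter

noncomputable def rho : ℝ → ℝ := fun u => Real.smoothTransition (4*u - 1)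

lemma rho_contDiff {n : ℕ∞} : ContDiff ℝ n rho := by
  have : ContDiff ℝ (n:ℕ∞) (fun u : ℝ => 4*u - 1) := by fun_prop
  exact Real.smoothTransition.contDiff.comp this

lemma rho_nonneg (u : ℝ) : 0 ≤ rho u := Real.smoothTransition.nonneg _
lemma rho_le_one (u : ℝ) : rho u ≤ 1 := Real.smoothTransition.le_one _
lemma rho_eq_zero {u : ℝ} (h : u ≤ 1/4) : rho u = 0 :=
  Real.smoothTransition.zero_of_nonpos (by linarith)
lemma rho_eq_one {u : ℝ} (h : 1/2 ≤ u) : rho u = 1 :=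
  Real.smoothTransition.one_of_one_le (by linarith)

lemma deriv_rho_contDiff {n : ℕ∞} : ContDiff ℝ n (deriv rho) := by
  have h : ContDiff ℝ (↑(⊤:ℕ∞)) rho := rho_contDiff
  have := (contDiff_infty_iff_deriv.mp h).2
  exact this.of_le (by exact_mod_cast le_top)

lemma deriv_rho_eq_zero_lt {u : ℝ} (h : u < 1/4) : deriv rho u = 0 := by
  have hev : rho =ᶠ[nhds u] (fun _ => (0:ℝ)) := by
    filter_upwards [Iio_mem_nhds h] with v hv
    exact rho_eq_zero (le_of_lt hv)
  rw [hev.deriv_eq, deriv_const]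

lemma deriv_rho_eq_zero_gt {u : ℝ} (h : 1/2 < u) : deriv rho u = 0 := by
  have hev : rho =ᶠ[nhds u] (fun _ => (1:ℝ)) := by
    filter_upwards [Ioi_mem_nhds h] with v hv
    exact rho_eq_one (le_of_lt hv)
  rw [hev.deriv_eq, deriv_const]

section Susp

variable {f : ℝ → ℝ} (hf : ContDiff ℝ 1 f) (hmono : StrictMono f)
  (hbij : Function.Bijective f) (hderiv : ∀ x : ℝ, deriv f x ≠ 0)

/-- the interpolation `h_u = (1-ρ(u))·id + ρ(u)·f` -/
noncomputable def hm (f : ℝ → ℝ) : ℝ → ℝ → ℝ := fun u c => c + rho u * (f c - c)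

/-- the plane map `H(u,c) = (u, h_u(c))` -/
noncomputable def Hm (f : ℝ → ℝ) : ℝ × ℝ → ℝ × ℝ := fun p => (p.1, hm f p.1 p.2)

include hf hmono hderiv in
lemma deriv_f_pos : ∀ c, 0 < deriv f c := by
  intro c
  rcases lt_or_gt_of_ne (hderiv c) with h | h
  · exfalso
    have hd : HasDerivAt f (deriv f c) c := (hf.differentiable one_ne_zero c).hasDerivAt
    have := hd.tendsto_slope_zero_right
    have hev : ∀ᶠ t in nhdsWithin (0:ℝ) (Ioi 0), 0 ≤ (t : ℝ)⁻¹ • (f (c + t) - f c) := by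
      filter_upwards [self_mem_nhdsWithin] with t ht
      have hfc : f c ≤ f (c + t) := (hmono.le_iff_le).2 (by linarith [mem_Ioi.mp ht])
      have h0 : (0:ℝ) < t := ht
      rw [smul_eq_mul]
      have : (0:ℝ) ≤ f (c + t) - f c := by linarith
      positivity
    have hle : 0 ≤ deriv f c := ge_of_tendsto this hev
    exact absurd hle (not_le.mpr h)
  · exact h

include hf hmono hderiv in
lemma dpos (u c : ℝ) : 0 < 1 + rho u * (deriv f c - 1) := by
  have h1 := deriv_f_pos hf hmono hderiv c
  have h2 := rho_nonneg u
  have h3 := rho_le_one u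
  rcases eq_or_lt_of_le h3 with h4 | h4
  · rw [h4]; linarith
  · nlinarith

include hmono in
lemma hm_strictMono (u : ℝ) : StrictMono (hm f u) := by
  intro c c' hcc
  have h1 := hmono hcc
  have h2 := rho_nonneg u
  have h3 := rho_le_one u
  simp only [hm]
  rcases eq_or_lt_of_le h2 with h4 | h4
  · rw [← h4]; simp; linarith
  · nlinarith

include hf hmono hbij in
lemma hm_surjective (u : ℝ) : Function.Surjective (hm f u) := by
  have hcont : Continuous (hm f u) := by
    have := hf.continuous
    unfold hm; fun_prop
  have hftop : Tendsto f atTop atTop :=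
    tendsto_atTop_atTop_of_monotone hmono.monotone (fun b => (hbij.2 b).imp fun a ha => ha.ge)
  have hfbot : Tendsto f atBot atBot :=
    tendsto_atBot_atBot_of_monotone hmono.monotone (fun b => (hbij.2 b).imp fun a ha => ha.le)
  apply hcont.surjective
  · rw [tendsto_atTop]
    intro b
    filter_upwards [eventually_ge_atTop b, hftop.eventually (eventually_ge_atTop b)] with c h1 h2
    have h3 := rho_nonneg u; have h4 := rho_le_one u
    simp only [hm]; nlinarith
  · rw [tendsto_atBot]
    intro b
    filter_upwards [eventually_le_atBot b, hfbot.eventually (eventually_le_atBot b)] with c h1 h2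
    have h3 := rho_nonneg u; have h4 := rho_le_one u
    simp only [hm]; nlinarith

include hf hmono hbij in
lemma Hm_bijective : Function.Bijective (Hm f) := by
  constructor
  · rintro ⟨u, c⟩ ⟨u', c'⟩ h
    simp only [Hm, Prod.mk.injEq] at h
    obtain ⟨rfl, h2⟩ := h
    exact Prod.ext rfl ((hm_strictMono hmono u).injective h2)
  · rintro ⟨u, y⟩
    obtain ⟨c, hc⟩ := hm_surjective hf hmono hbij u y
    exact ⟨(u, c), by simp [Hm, hc]⟩

include hf in
lemma hm_contDiff : ContDiff ℝ 1 (fun p : ℝ × ℝ => hm f p.1 p.2) := by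
  unfold hm
  apply ContDiff.add contDiff_snd
  exact ((rho_contDiff (n := 1)).comp contDiff_fst).mul ((hf.comp contDiff_snd).sub contDiff_snd)

include hf in
lemma Hm_contDiff : ContDiff ℝ 1 (Hm f) := contDiff_fst.prodMk (hm_contDiff hf)

/-- The triangular linear equivalence `(du, dc) ↦ (du, a·du + d·dc)` for `d ≠ 0`. -/
noncomputable def Lmap (a d : ℝ) (hd : d ≠ 0) : (ℝ × ℝ) ≃L[ℝ] (ℝ × ℝ) :=
  LinearEquiv.toContinuousLinearEquiv
  { toFun := fun p => (p.1, a * p.1 + d * p.2)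
    map_add' := fun p q => by simp [Prod.ext_iff]; ring
    map_smul' := fun r p => by simp [Prod.ext_iff, Prod.smul_def, smul_eq_mul]; ring
    invFun := fun p => (p.1, (p.2 - a * p.1) / d)
    left_inv := fun p => by simp [Prod.ext_iff]; field_simp; try ring
    right_inv := fun p => by simp [Prod.ext_iff]; field_simp; try ring }

@[simp] lemma Lmap_apply (a d : ℝ) (hd : d ≠ 0) (p : ℝ × ℝ) :
    (Lmap a d hd : (ℝ × ℝ) →L[ℝ] (ℝ × ℝ)) p = (p.1, a * p.1 + d * p.2) := rfl

@[simp] lemma Lmap_apply' (a d : ℝ) (hd : d ≠ 0) (p : ℝ × ℝ) :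
    (Lmap a d hd) p = (p.1, a * p.1 + d * p.2) := rfl

include hf hmono hderiv in
lemma Hm_hasFDerivAt (u c : ℝ) :
    HasFDerivAt (Hm f)
      ((Lmap (deriv rho u * (f c - c)) (1 + rho u * (deriv f c - 1))
        (dpos hf hmono hderiv u c).ne' : (ℝ × ℝ) →L[ℝ] (ℝ × ℝ))) (u, c) := by
  have hrho : HasDerivAt rho (deriv rho u) u :=
    ((rho_contDiff (n := 1)).differentiable (by norm_num) u).hasDerivAt
  have hfc : HasDerivAt f (deriv f c) c := (hf.differentiable one_ne_zero c).hasDerivAt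
  have h1 : HasFDerivAt (fun p : ℝ × ℝ => rho p.1)
      ((deriv rho u) • (ContinuousLinearMap.fst ℝ ℝ ℝ)) (u, c) :=
    hrho.comp_hasFDerivAt (h₂ := rho) _ (hasFDerivAt_fst)
  have h2a : HasFDerivAt (fun p : ℝ × ℝ => f p.2)
      ((deriv f c) • (ContinuousLinearMap.snd ℝ ℝ ℝ)) (u, c) :=
    hfc.comp_hasFDerivAt _ (hasFDerivAt_snd)
  have h2 : HasFDerivAt (fun p : ℝ × ℝ => f p.2 - p.2)
      ((deriv f c) • (ContinuousLinearMap.snd ℝ ℝ ℝ) - (ContinuousLinearMap.snd ℝ ℝ ℝ)) (u, c) :=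
    h2a.sub hasFDerivAt_snd
  have h3 : HasFDerivAt (fun p : ℝ × ℝ => p.2 + rho p.1 * (f p.2 - p.2)) _ (u, c) :=
    (hasFDerivAt_snd).add (h1.mul h2)
  have h4 := (hasFDerivAt_fst (p := ((u, c) : ℝ × ℝ))).prodMk h3
  refine h4.congr_fderiv ?_
  refine ContinuousLinearMap.ext fun p => Prod.ext ?_ ?_ <;>
    simp [smul_eq_mul] <;> ring

include hf hmono hbij hderiv in
lemma exists_W : ∃ W : ℝ × ℝ → ℝ,
    (∀ q, ContDiffAt ℝ 1 W q) ∧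
    (∀ u c, W (u, hm f u c) = c) ∧
    (∀ u y, hm f u (W (u, y)) = y) := by
  set E := Equiv.ofBijective (Hm f) (Hm_bijective hf hmono hbij) with hE
  have hEapp : ∀ p, E p = Hm f p := fun p => rfl
  have hfst : ∀ q, (E.symm q).1 = q.1 := by
    intro q
    have : Hm f (E.symm q) = q := E.apply_symm_apply q
    have := congrArg Prod.fst this
    simpa [Hm] using this
  refine ⟨fun q => (E.symm q).2, ?_, ?_, ?_⟩
  · intro q
    set p := E.symm q with hp
    have hq : Hm f p = q := E.apply_symm_apply q
    have hC : ContDiffAt ℝ 1 (Hm f) (p.1, p.2) := (Hm_contDiff hf).contDiffAt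
    have hD := Hm_hasFDerivAt hf hmono hderiv p.1 p.2
    have hS := hC.hasStrictFDerivAt' hD one_ne_zero
    have hli : ContDiffAt ℝ 1 (hC.localInverse hD one_ne_zero) (Hm f (p.1, p.2)) :=
      hC.to_localInverse hD one_ne_zero
    have hq' : Hm f (p.1, p.2) = q := hq
    rw [hq'] at hli
    have hev : (fun q' => (E.symm q').2) =ᶠ[nhds q] (fun q' => (hC.localInverse hD one_ne_zero q').2) := by
      have hri := hS.eventually_right_inverse
      rw [hq'] at hri
      filter_upwards [hri] with y hy
      have : E.symm y = hC.localInverse hD one_ne_zero y := by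
        conv_lhs => rw [← hy]
        exact E.symm_apply_apply _
      rw [this]
    exact (ContDiffAt.comp q contDiffAt_snd hli).congr_of_eventuallyEq hev
  · intro u c
    have : (u, hm f u c) = E (u, c) := rfl
    rw [this]
    show (E.symm (E (u, c))).2 = c
    rw [E.symm_apply_apply]
  · intro u y
    have h1 : Hm f (E.symm (u, y)) = (u, y) := E.apply_symm_apply _
    have h2 := hfst (u, y)
    simp only [Hm] at h1
    rw [h2] at h1
    exact congrArg Prod.snd h1

include hf hmono in
lemma psi_hasDerivAt (g : ℤ → ℝ) (hg : ∀ m : ℤ, g (m + 1) = f (g m)) (ξ : ℝ) :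
    HasDerivAt (fun ξ' => hm f (Int.fract ξ') (g ⌊ξ'⌋))
      (deriv rho (Int.fract ξ) * (f (g ⌊ξ⌋) - g ⌊ξ⌋)) ξ := by
  set n := ⌊ξ⌋ with hn
  by_cases h0 : Int.fract ξ = 0
  · -- ξ is an integer; the function is locally constant
    have hξn : ξ = (n : ℝ) := by
      have := Int.fract_add_floor ξ
      rw [h0] at this; simpa using this.symm
    have hloc : (fun ξ' => hm f (Int.fract ξ') (g ⌊ξ'⌋)) =ᶠ[nhds ξ] (fun _ => g n) := by
      filter_upwards [Ioo_mem_nhds (show ξ - 1/2 < ξ by linarith) (show ξ < ξ + 1/4 by linarith)]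
        with ξ' hξ'
      obtain ⟨hl, hr⟩ := hξ'
      rcases le_or_gt (n : ℝ) ξ' with hge | hlt
      · have hfl : ⌊ξ'⌋ = n := by
          rw [Int.floor_eq_iff]
          constructor
          · exact_mod_cast hge
          · push_cast; rw [hξn] at hr; linarith
        have hfr : Int.fract ξ' = ξ' - n := by rw [Int.fract, hfl]
        have hrho : rho (Int.fract ξ') = 0 := by
          apply rho_eq_zero
          rw [hfr]; rw [hξn] at hr; linarith
        simp [hm, hrho, hfl]
      · have hfl : ⌊ξ'⌋ = n - 1 := by
          rw [Int.floor_eq_iff]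
          constructor
          · push_cast; rw [hξn] at hl; linarith
          · push_cast; linarith
        have hfr : Int.fract ξ' = ξ' - (n - 1 : ℤ) := by rw [Int.fract, hfl]
        have hrho : rho (Int.fract ξ') = 1 := by
          apply rho_eq_one
          rw [hfr]; push_cast; rw [hξn] at hl; linarith
        have : hm f (Int.fract ξ') (g (n - 1)) = f (g (n - 1)) := by
          simp [hm, hrho]
        rw [hfl, this, ← hg (n - 1)]
        norm_num
    have hd0 : HasDerivAt (fun _ : ℝ => g n) 0 ξ := hasDerivAt_const ξ (g n)
    have := hd0.congr_of_eventuallyEq hloc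
    exact this.congr_deriv (by rw [h0, deriv_rho_eq_zero_lt (by norm_num), zero_mul])
  · -- ξ is strictly between n and n+1
    have hfr0 : Int.fract ξ = ξ - n := by rw [Int.fract]
    have hlt : (n : ℝ) < ξ := by
      have h1 : 0 ≤ Int.fract ξ := Int.fract_nonneg ξ
      have : 0 < Int.fract ξ := lt_of_le_of_ne h1 (Ne.symm h0)
      rw [hfr0] at this; linarith
    have hub : ξ < (n : ℝ) + 1 := by exact_mod_cast Int.lt_floor_add_one ξ
    have hloc : (fun ξ' => hm f (Int.fract ξ') (g ⌊ξ'⌋)) =ᶠ[nhds ξ]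
        (fun ξ' => g n + rho (ξ' - n) * (f (g n) - g n)) := by
      filter_upwards [Ioo_mem_nhds hlt hub] with ξ' hξ'
      have hfl : ⌊ξ'⌋ = n := by
        rw [Int.floor_eq_iff]
        exact ⟨hξ'.1.le, by exact_mod_cast hξ'.2⟩
      have hfr : Int.fract ξ' = ξ' - n := by rw [Int.fract, hfl]
      simp [hm, hfr, hfl]
    have hrho : HasDerivAt rho (deriv rho (ξ - n)) (ξ - n) :=
      ((rho_contDiff (n := 1)).differentiable (by norm_num) _).hasDerivAt
    have hsub : HasDerivAt (fun ξ' : ℝ => ξ' - (n : ℝ)) 1 ξ := (hasDerivAt_id ξ).sub_const _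
    have hcomp : HasDerivAt (fun ξ' : ℝ => rho (ξ' - n)) (deriv rho (ξ - n) * 1) ξ :=
      hrho.comp (h₂ := rho) ξ hsub
    have hd : HasDerivAt (fun ξ' => g n + rho (ξ' - n) * (f (g n) - g n))
        (deriv rho (ξ - n) * 1 * (f (g n) - g n)) ξ :=
      (hcomp.mul_const _).const_add _
    have := hd.congr_of_eventuallyEq hloc
    exact this.congr_deriv (by rw [hfr0]; ring)

end Susp

/-- **Suspension lemma.** Given a `C¹` increasing diffeomorphism `f : ℝ → ℝ`,
there is a vector field `X̂_f(x,y) = (1, X₂(x,y))` on `ℝ²` with `X₂` `C¹` and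
1-periodic in `x`, whose flow is complete (given here by total maps `Φ^t` forming
a one-parameter group solving the ODE) and satisfies
`Φ¹(n, y) = (n+1, f(y))` for all `(n,y) ∈ ℤ × ℝ`. -/
theorem exists_suspension (f : ℝ → ℝ) (hf : ContDiff ℝ 1 f)
    (hmono : StrictMono f) (hbij : Function.Bijective f)
    (hderiv : ∀ x : ℝ, deriv f x ≠ 0) :
    ∃ X₂ : ℝ × ℝ → ℝ, ContDiff ℝ 1 X₂ ∧
      (∀ x y : ℝ, X₂ (x + 1, y) = X₂ (x, y)) ∧
      ∃ Φ : ℝ → ℝ × ℝ → ℝ × ℝ,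
        (∀ z : ℝ × ℝ, Φ 0 z = z) ∧
        (∀ s t : ℝ, ∀ z : ℝ × ℝ, Φ (s + t) z = Φ s (Φ t z)) ∧
        (∀ (z : ℝ × ℝ) (t : ℝ),
          HasDerivAt (fun s => Φ s z) ((1 : ℝ), X₂ (Φ t z)) t) ∧
        (∀ (n : ℤ) (y : ℝ), Φ 1 ((n : ℝ), y) = ((n : ℝ) + 1, f y)) := by
  obtain ⟨W, hWc, hWl, hWr⟩ := exists_W hf hmono hbij hderiv
  set e : Equiv.Perm ℝ := Equiv.ofBijective f hbij with he
  have heapp : ∀ x, e x = f x := fun x => rfl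
  have headd : ∀ (a b : ℤ) (x : ℝ), (e ^ (a + b)) x = (e ^ a) ((e ^ b) x) := by
    intro a b x
    rw [zpow_add]
    rfl
  have hestep : ∀ (m : ℤ) (x : ℝ), (e ^ (m + 1)) x = f ((e ^ m) x) := by
    intro m x
    rw [add_comm, headd 1 m, ← heapp, zpow_one]
  -- the vector field
  refine ⟨fun p => deriv rho (Int.fract p.1) *
      (f (W (Int.fract p.1, p.2)) - W (Int.fract p.1, p.2)), ?_, ?_, ?_⟩
  · -- C¹
    rw [contDiff_iff_contDiffAt]
    rintro ⟨x, y⟩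
    by_cases h0 : Int.fract x = 0
    · -- near an integer the field vanishes
      have hxn : x = ((⌊x⌋ : ℤ) : ℝ) := by
        have := Int.fract_add_floor x
        rw [h0] at this; simpa using this.symm
      set n := ⌊x⌋ with hn
      have hev : (fun p : ℝ × ℝ => deriv rho (Int.fract p.1) *
          (f (W (Int.fract p.1, p.2)) - W (Int.fract p.1, p.2))) =ᶠ[nhds (x, y)]
          (fun _ => (0 : ℝ)) := by
        have hm1 : Ioo (x - 1/2) (x + 1/4) ∈ nhds x :=
          Ioo_mem_nhds (by linarith) (by linarith)
        filter_upwards [prod_mem_nhds hm1 univ_mem] with p hp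
        obtain ⟨⟨hl, hr⟩, -⟩ := hp
        have hz : deriv rho (Int.fract p.1) = 0 := by
          rcases le_or_gt ((n : ℝ)) p.1 with hge | hlt
          · have hfl : ⌊p.1⌋ = n := by
              rw [Int.floor_eq_iff]
              exact ⟨by exact_mod_cast hge, by push_cast; rw [hxn] at hr; linarith⟩
            apply deriv_rho_eq_zero_lt
            rw [Int.fract, hfl]; rw [hxn] at hr; linarith
          · have hfl : ⌊p.1⌋ = n - 1 := by
              rw [Int.floor_eq_iff]
              constructor
              · push_cast; rw [hxn] at hl; linarith
              · push_cast; linarith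
            apply deriv_rho_eq_zero_gt
            rw [Int.fract, hfl]; push_cast; rw [hxn] at hl; linarith
        rw [hz, zero_mul]
      exact contDiffAt_const.congr_of_eventuallyEq hev
    · -- in the interior of a fundamental strip
      set n := ⌊x⌋ with hn
      have hfr0 : Int.fract x = x - n := by rw [Int.fract]
      have hlt : (n : ℝ) < x := by
        have h1 : 0 ≤ Int.fract x := Int.fract_nonneg x
        have : 0 < Int.fract x := lt_of_le_of_ne h1 (Ne.symm h0)
        rw [hfr0] at this; linarith
      have hub : x < (n : ℝ) + 1 := by exact_mod_cast Int.lt_floor_add_one x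
      have hA : ContDiffAt ℝ 1 (fun p : ℝ × ℝ => ((p.1 - (n : ℝ), p.2) : ℝ × ℝ)) (x, y) := by
        apply ContDiffAt.prodMk <;> fun_prop
      have hAval : (fun p : ℝ × ℝ => ((p.1 - (n : ℝ), p.2) : ℝ × ℝ)) (x, y) = (x - n, y) := rfl
      have hWA : ContDiffAt ℝ 1 (fun p : ℝ × ℝ => W (p.1 - (n : ℝ), p.2)) (x, y) :=
        ContDiffAt.comp _ (by rw [hAval] at *; exact hWc (x - n, y)) hA
      have hrhoA : ContDiffAt ℝ 1 (fun p : ℝ × ℝ => deriv rho (p.1 - (n : ℝ))) (x, y) := by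
        exact ContDiffAt.comp _ (deriv_rho_contDiff (n := 1)).contDiffAt (by fun_prop)
      have hfA : ContDiffAt ℝ 1 (fun p : ℝ × ℝ => f (W (p.1 - (n : ℝ), p.2))) (x, y) :=
        ContDiffAt.comp _ hf.contDiffAt hWA
      have hg : ContDiffAt ℝ 1 (fun p : ℝ × ℝ => deriv rho (p.1 - (n : ℝ)) *
          (f (W (p.1 - (n : ℝ), p.2)) - W (p.1 - (n : ℝ), p.2))) (x, y) :=
        hrhoA.mul (hfA.sub hWA)
      apply hg.congr_of_eventuallyEq
      filter_upwards [prod_mem_nhds (Ioo_mem_nhds hlt hub) univ_mem] with p hp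
      obtain ⟨⟨hl, hr⟩, -⟩ := hp
      have hfl : ⌊p.1⌋ = n := by
        rw [Int.floor_eq_iff]
        exact ⟨hl.le, by exact_mod_cast hr⟩
      have hfrp : Int.fract p.1 = p.1 - n := by rw [Int.fract, hfl]
      rw [hfrp]
  · -- periodicity
    intro x y
    simp [Int.fract_add_intCast]
  · -- the flow
    refine ⟨fun t z => (z.1 + t,
      hm f (Int.fract (z.1 + t)) ((e ^ (⌊z.1 + t⌋ - ⌊z.1⌋)) (W (Int.fract z.1, z.2)))), ?_, ?_, ?_, ?_⟩
    · intro z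
      simp only [add_zero, sub_self, zpow_zero]
      exact Prod.ext rfl (by simpa using hWr (Int.fract z.1) z.2)
    · intro s t z
      have h1 : z.1 + (s + t) = z.1 + t + s := by ring
      refine Prod.ext (by simp; ring) ?_
      simp only
      rw [hWl (Int.fract (z.1 + t))]
      rw [← headd]
      rw [h1]
      congr 2
      ring
    · intro z t
      set w := W (Int.fract z.1, z.2) with hw
      set g : ℤ → ℝ := fun m => (e ^ (m - ⌊z.1⌋)) w with hgdef
      have hg : ∀ m : ℤ, g (m + 1) = f (g m) := by
        intro m
        show (e ^ (m + 1 - ⌊z.1⌋)) w = f ((e ^ (m - ⌊z.1⌋)) w)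
        rw [show m + 1 - ⌊z.1⌋ = (m - ⌊z.1⌋) + 1 by ring, hestep]
      have hcore := psi_hasDerivAt hf hmono g hg (z.1 + t)
      have hshift : HasDerivAt (fun s : ℝ => z.1 + s) 1 t := (hasDerivAt_id t).const_add _
      have hcomp : HasDerivAt (fun s : ℝ => hm f (Int.fract (z.1 + s)) (g ⌊z.1 + s⌋))
          ((deriv rho (Int.fract (z.1 + t)) * (f (g ⌊z.1 + t⌋) - g ⌊z.1 + t⌋)) * 1) t :=
        hcore.comp t hshift
      rw [mul_one] at hcomp
      have hX : deriv rho (Int.fract (z.1 + t)) * (f (g ⌊z.1 + t⌋) - g ⌊z.1 + t⌋) =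
          (fun p : ℝ × ℝ => deriv rho (Int.fract p.1) *
            (f (W (Int.fract p.1, p.2)) - W (Int.fract p.1, p.2)))
          (z.1 + t, hm f (Int.fract (z.1 + t)) ((e ^ (⌊z.1 + t⌋ - ⌊z.1⌋)) w)) := by
        simp only
        rw [hWl (Int.fract (z.1 + t))]
      exact hshift.prodMk (hX ▸ hcomp)
    · intro n y
      have hfr : Int.fract ((n : ℝ)) = 0 := Int.fract_intCast n
      have hfr1 : Int.fract ((n : ℝ) + 1) = 0 := by
        rw [show ((n : ℝ) + 1) = ((n + 1 : ℤ) : ℝ) by push_cast; ring, Int.fract_intCast]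
      have hfl : ⌊(n : ℝ) + 1⌋ - ⌊(n : ℝ)⌋ = 1 := by
        rw [show ((n : ℝ) + 1) = ((n + 1 : ℤ) : ℝ) by push_cast; ring, Int.floor_intCast,
          Int.floor_intCast]
        ring
      have hW0 : W (0, y) = y := by
        have := hWl 0 y
        rwa [show hm f 0 y = y by simp [hm, rho_eq_zero (by norm_num : (0:ℝ) ≤ 1/4)]] at this
      refine Prod.ext rfl ?_
      simp only [hfr, hfr1, hfl, hW0, zpow_one]
      rw [show hm f 0 (e y) = e y by simp [hm, rho_eq_zero (by norm_num : (0:ℝ) ≤ 1/4)]]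
      exact heapp y
end
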